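/- Let P be a pointed category with weak finite limits. The regular completion of P is a normal category if and only if every internal reflexive graph in P satisfies (∗π₀) with respect to the ideal of null morphisms of P. -/

import Mathlib

open CategoryTheory CategoryTheory.Limits

universe v u

variable {C : Type u} [Category.{v} C]

/-- A class of morphisms of a category. -/
abbrev MorClass (C : Type u) [Category.{v} C] :=
  ∀ ⦃X Y : C⦄, (X ⟶ Y) → Prop

/-- An ideal of morphisms: closed under pre- and post-composition with arbitrary morphisms. -/
def IsMorIdeal (N : MorClass C) : Prop :=
  (∀ ⦃X Y Z : C⦄ (f : X ⟶ Y) (g : Y ⟶ Z), N g → N (f ≫ g)) ∧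
  (∀ ⦃X Y Z : C⦄ (f : X ⟶ Y) (g : Y ⟶ Z), N f → N (f ≫ g))

/-- `k` is a weak `N`-kernel of `f`. -/
def IsWeakKernel (N : MorClass C) {K X Y : C} (f : X ⟶ Y) (k : K ⟶ X) : Prop :=
  N (k ≫ f) ∧ ∀ ⦃K' : C⦄ (k' : K' ⟶ X), N (k' ≫ f) → ∃ u : K' ⟶ K, u ≫ k = k'

/-- `k` is an `N`-kernel of `f` (unique factorization). -/
def IsNKernel (N : MorClass C) {K X Y : C} (f : X ⟶ Y) (k : K ⟶ X) : Prop :=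
  N (k ≫ f) ∧ ∀ ⦃K' : C⦄ (k' : K' ⟶ X), N (k' ≫ f) → ∃! u : K' ⟶ K, u ≫ k = k'

def HasWeakKernels (N : MorClass C) : Prop :=
  ∀ ⦃X Y : C⦄ (f : X ⟶ Y), ∃ (K : C) (k : K ⟶ X), IsWeakKernel N f k

def HasNKernels (N : MorClass C) : Prop :=
  ∀ ⦃X Y : C⦄ (f : X ⟶ Y), ∃ (K : C) (k : K ⟶ X), IsNKernel N f k

/-- The condition (∗π₀) for a pair of parallel morphisms: for a weak `N`-kernel `k` of `f₁`
and any morphism `g`, `g f₁ k = g f₂ k ⟺ g f₁ = g f₂`. -/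
def StarPi0 (N : MorClass C) {X Y : C} (f₁ f₂ : X ⟶ Y) : Prop :=
  ∀ ⦃K : C⦄ (k : K ⟶ X), IsWeakKernel N f₁ k →
    ∀ ⦃Z : C⦄ (g : Y ⟶ Z), (k ≫ f₁ ≫ g = k ≫ f₂ ≫ g ↔ f₁ ≫ g = f₂ ≫ g)

/-- `(u, v)` is a weak kernel pair of `f`. -/
def IsWeakKernelPair {P X Y : C} (f : X ⟶ Y) (u v : P ⟶ X) : Prop :=
  u ≫ f = v ≫ f ∧ ∀ ⦃Q : C⦄ (u' v' : Q ⟶ X), u' ≫ f = v' ≫ f →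
    ∃ w : Q ⟶ P, w ≫ u = u' ∧ w ≫ v = v'

/-- `(u, v)` is the kernel pair of `f`. -/
def IsKernelPairOf {P X Y : C} (f : X ⟶ Y) (u v : P ⟶ X) : Prop :=
  u ≫ f = v ≫ f ∧ ∀ ⦃Q : C⦄ (u' v' : Q ⟶ X), u' ≫ f = v' ≫ f →
    ∃! w : Q ⟶ P, w ≫ u = u' ∧ w ≫ v = v'

def HasWeakKernelPairs (C : Type u) [Category.{v} C] : Prop :=
  ∀ ⦃X Y : C⦄ (f : X ⟶ Y), ∃ (P : C) (u v : P ⟶ X), IsWeakKernelPair f u v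

def HasKernelPairs (C : Type u) [Category.{v} C] : Prop :=
  ∀ ⦃X Y : C⦄ (f : X ⟶ Y), ∃ (P : C) (u v : P ⟶ X), IsKernelPairOf f u v

/-- `f` is a coequalizer of the pair `(u, v)`. -/
def IsCoequalizerOf {P X Y : C} (u v : P ⟶ X) (f : X ⟶ Y) : Prop :=
  u ≫ f = v ≫ f ∧ ∀ ⦃Z : C⦄ (g : X ⟶ Z), u ≫ g = v ≫ g → ∃! h : Y ⟶ Z, f ≫ h = g

/-- `f` is a regular epimorphism: a coequalizer of some pair. -/
def IsRegEpi {X Y : C} (f : X ⟶ Y) : Prop :=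
  ∃ (P : C) (u v : P ⟶ X), IsCoequalizerOf u v f

/-- `(p₁, p₂)` is a pullback of `(f, g)`. -/
def IsPullbackSq {P X Y Z : C} (p₁ : P ⟶ X) (p₂ : P ⟶ Y) (f : X ⟶ Z) (g : Y ⟶ Z) : Prop :=
  p₁ ≫ f = p₂ ≫ g ∧ ∀ ⦃Q : C⦄ (q₁ : Q ⟶ X) (q₂ : Q ⟶ Y), q₁ ≫ f = q₂ ≫ g →
    ∃! w : Q ⟶ P, w ≫ p₁ = q₁ ∧ w ≫ p₂ = q₂

/-- A regular category: finitely complete, kernel pairs have coequalizers, and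
regular epimorphisms are stable under pullback. -/
structure IsRegularCat (C : Type u) [Category.{v} C] : Prop where
  hasFiniteLimits : HasFiniteLimits C
  coeqOfKernelPairs : ∀ ⦃P X Y : C⦄ (f : X ⟶ Y) (u v : P ⟶ X), IsKernelPairOf f u v →
    ∃ (Q : C) (q : X ⟶ Q), IsCoequalizerOf u v q
  regEpiStable : ∀ ⦃P X Y Z : C⦄ (p₁ : P ⟶ X) (p₂ : P ⟶ Y) (f : X ⟶ Z) (g : Y ⟶ Z),
    IsPullbackSq p₁ p₂ f g → IsRegEpi g → IsRegEpi p₁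

/-- `P` (a class of objects, regarded as a full subcategory) is a projective cover of `C`. -/
structure IsProjectiveCover (P : Set C) : Prop where
  proj : ∀ ⦃X : C⦄, X ∈ P → ∀ ⦃A B : C⦄ (e : A ⟶ B), IsRegEpi e →
    ∀ f : X ⟶ B, ∃ g : X ⟶ A, g ≫ e = f
  covers : ∀ X : C, ∃ (Q : C) (_ : Q ∈ P) (e : Q ⟶ X), IsRegEpi e

/-- An ideal of the full subcategory on `P`, encoded as a class of morphisms of `C`
supported on `P`-objects and closed under composition with `P`-morphisms. -/
def IsMorIdealOn (P : Set C) (N : MorClass C) : Prop :=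
  (∀ ⦃X Y : C⦄ (f : X ⟶ Y), N f → X ∈ P ∧ Y ∈ P) ∧
  (∀ ⦃X Y Z : C⦄ (f : X ⟶ Y) (g : Y ⟶ Z), X ∈ P → N g → N (f ≫ g)) ∧
  (∀ ⦃X Y Z : C⦄ (f : X ⟶ Y) (g : Y ⟶ Z), Z ∈ P → N f → N (f ≫ g))

/-- The extension `N^C` of an ideal `N` of the full subcategory `P` to `C`. -/
def extClass (P : Set C) (N : MorClass C) : MorClass C := fun X Y f =>
  ∃ (A B : C) (_ : A ∈ P) (_ : B ∈ P) (n : A ⟶ B) (e : A ⟶ X) (e' : B ⟶ Y),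
    IsRegEpi e ∧ IsRegEpi e' ∧ N n ∧ e ≫ f = n ≫ e'

/-- The restriction `M_P` of an ideal `M` of `C` to the full subcategory `P`. -/
def restClass (P : Set C) (M : MorClass C) : MorClass C := fun X Y f =>
  X ∈ P ∧ Y ∈ P ∧ M f

/-- `k` is a weak `N`-kernel of `f` computed in the full subcategory `P`. -/
def IsWeakKernelOn (P : Set C) (N : MorClass C) {K X Y : C} (f : X ⟶ Y) (k : K ⟶ X) : Prop :=
  K ∈ P ∧ N (k ≫ f) ∧ ∀ ⦃K' : C⦄, K' ∈ P → ∀ k' : K' ⟶ X, N (k' ≫ f) →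
    ∃ u : K' ⟶ K, u ≫ k = k'

def HasWeakKernelsOn (P : Set C) (N : MorClass C) : Prop :=
  ∀ ⦃X Y : C⦄, X ∈ P → Y ∈ P → ∀ f : X ⟶ Y, ∃ (K : C) (k : K ⟶ X), IsWeakKernelOn P N f k

/-- The condition (∗π₀) interpreted in the full subcategory `P`. -/
def StarPi0On (P : Set C) (N : MorClass C) {X Y : C} (f₁ f₂ : X ⟶ Y) : Prop :=
  ∀ ⦃K : C⦄ (k : K ⟶ X), IsWeakKernelOn P N f₁ k →
    ∀ ⦃Z : C⦄, Z ∈ P → ∀ g : Y ⟶ Z, (k ≫ f₁ ≫ g = k ≫ f₂ ≫ g ↔ f₁ ≫ g = f₂ ≫ g)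

/-- Every internal reflexive graph of `C` satisfies (∗π₀). -/
def ReflGraphsStarPi0 (N : MorClass C) : Prop :=
  ∀ ⦃G₁ G₀ : C⦄ (d c : G₁ ⟶ G₀) (e : G₀ ⟶ G₁), e ≫ d = 𝟙 G₀ → e ≫ c = 𝟙 G₀ →
    StarPi0 N d c

/-- Every internal reflexive graph of the full subcategory `P` satisfies (∗π₀). -/
def ReflGraphsStarPi0On (P : Set C) (N : MorClass C) : Prop :=
  ∀ ⦃G₁ G₀ : C⦄, G₁ ∈ P → G₀ ∈ P → ∀ (d c : G₁ ⟶ G₀) (e : G₀ ⟶ G₁),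
    e ≫ d = 𝟙 G₀ → e ≫ c = 𝟙 G₀ → StarPi0On P N d c

/-- Every regular epimorphism is a coequalizer of its kernel star (star-regularity condition). -/
def RegEpisCoeqOfKernelStar (N : MorClass C) : Prop :=
  ∀ ⦃X Y : C⦄ (f : X ⟶ Y), IsRegEpi f →
    ∀ ⦃P : C⦄ (u v : P ⟶ X), IsKernelPairOf f u v →
      ∀ ⦃K : C⦄ (k : K ⟶ P), IsNKernel N u k →
        IsCoequalizerOf (k ≫ u) (k ≫ v) f

/-- `f` is `N`-saturating. -/
def IsSaturating (N : MorClass C) {P' Y : C} (f : P' ⟶ Y) : Prop :=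
  ∀ ⦃X : C⦄ (n : X ⟶ Y), N n →
    ∃ (Z : C) (g : Z ⟶ X) (m : Z ⟶ P'), IsRegEpi g ∧ N m ∧ m ≫ f = g ≫ n

/-- `C` is a regular completion of `P`: `P` is a projective cover and every object of `C`
admits a monomorphism into a finite product of `P`-objects (expressed via a jointly monic
finite family). -/
def IsRegularCompletionOf (P : Set C) : Prop :=
  IsProjectiveCover P ∧
    ∀ X : C, ∃ (n : ℕ) (obj : Fin n → C) (_ : ∀ i, obj i ∈ P) (m : ∀ i, X ⟶ obj i),
      ∀ ⦃W : C⦄ (a b : W ⟶ X), (∀ i, a ≫ m i = b ≫ m i) → a = b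

/-- `C` is pointed via the ideal `N` of null morphisms. -/
def IsPointedVia (N : MorClass C) : Prop :=
  IsMorIdeal N ∧ ∀ X Y : C, ∃! f : X ⟶ Y, N f

/-- The full subcategory `P` is pointed via the ideal `N` of null morphisms. -/
def IsPointedOn (P : Set C) (N : MorClass C) : Prop :=
  IsMorIdealOn P N ∧ ∀ ⦃X Y : C⦄, X ∈ P → Y ∈ P → ∃! f : X ⟶ Y, N f

/-- `f` is a normal epimorphism (a cokernel) with respect to the ideal `N`. -/
def IsNormalEpi (N : MorClass C) {X Y : C} (f : X ⟶ Y) : Prop :=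
  ∃ (A : C) (h : A ⟶ X), N (h ≫ f) ∧
    ∀ ⦃Z : C⦄ (g : X ⟶ Z), N (h ≫ g) → ∃! t : Y ⟶ Z, f ≫ t = g

/-- The full subcategory `P` has weak finite limits. -/
def HasWeakFiniteLimitsOn (P : Set C) : Prop :=
  ∀ (J : Type) [SmallCategory J] [FinCategory J]
    (F : J ⥤ ObjectProperty.FullSubcategory (fun X : C => X ∈ P)),
    ∃ c : Cone F, ∀ c' : Cone F, Nonempty (c' ⟶ c)

section Aux

lemma regEpi_id (X : C) : IsRegEpi (𝟙 X) :=
  ⟨X, 𝟙 X, 𝟙 X, rfl, fun _ g _ => ⟨g, by simp, fun y hy => by simpa using hy⟩⟩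

lemma IsRegEpi.cancel {X Y : C} {f : X ⟶ Y} (hf : IsRegEpi f) {Z : C} {a b : Y ⟶ Z}
    (hab : f ≫ a = f ≫ b) : a = b := by
  obtain ⟨Q, p, q, hpq, hco⟩ := hf
  have h1 : p ≫ f ≫ a = q ≫ f ≫ a := by rw [← Category.assoc, hpq, Category.assoc]
  obtain ⟨h, -, hu⟩ := hco _ h1
  exact (hu a rfl).trans (hu b hab.symm).symm

lemma splitEpi_regEpi {X Y : C} {f : X ⟶ Y} {s : Y ⟶ X} (hs : s ≫ f = 𝟙 Y) : IsRegEpi f := by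
  refine ⟨X, f ≫ s, 𝟙 X, ?_, fun Z g hg => ?_⟩
  · rw [Category.assoc, hs, Category.id_comp, Category.comp_id]
  · rw [Category.id_comp] at hg
    refine ⟨s ≫ g, by show f ≫ s ≫ g = g; rw [← Category.assoc]; exact hg, fun y hy => ?_⟩
    rw [← hy, ← Category.assoc, hs, Category.id_comp]

lemma regEpi_coeq_kp {X Y R : C} {f : X ⟶ Y} (hf : IsRegEpi f) {u v : R ⟶ X}
    (hkp : IsKernelPairOf f u v) : IsCoequalizerOf u v f := by
  refine ⟨hkp.1, fun Z g hg => ?_⟩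
  obtain ⟨Q, p, q, hpq, hco⟩ := hf
  obtain ⟨w, ⟨hw1, hw2⟩, -⟩ := hkp.2 p q hpq
  have : p ≫ g = q ≫ g := by rw [← hw1, ← hw2, Category.assoc, Category.assoc, hg]
  exact hco g this

lemma exists_kernelPair (hC : IsRegularCat C) {X Y : C} (f : X ⟶ Y) :
    ∃ (R : C) (u v : R ⟶ X), IsKernelPairOf f u v ∧
      ∃ δ : X ⟶ R, δ ≫ u = 𝟙 X ∧ δ ≫ v = 𝟙 X := by
  haveI := hC.hasFiniteLimits
  refine ⟨pullback f f, pullback.fst f f, pullback.snd f f, ⟨pullback.condition, ?_⟩, ?_⟩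
  · intro Q u' v' h
    refine ⟨pullback.lift u' v' h, ⟨pullback.lift_fst .., pullback.lift_snd ..⟩, ?_⟩
    rintro w ⟨hw1, hw2⟩
    apply pullback.hom_ext
    · rw [hw1]; exact (pullback.lift_fst ..).symm
    · rw [hw2]; exact (pullback.lift_snd ..).symm
  · exact ⟨pullback.lift (𝟙 X) (𝟙 X) rfl, pullback.lift_fst .., pullback.lift_snd ..⟩

lemma exists_pullbackSq (hC : IsRegularCat C) {X Y Z : C} (f : X ⟶ Z) (g : Y ⟶ Z) :
    ∃ (Pb : C) (p₁ : Pb ⟶ X) (p₂ : Pb ⟶ Y), IsPullbackSq p₁ p₂ f g := by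
  haveI := hC.hasFiniteLimits
  refine ⟨pullback f g, pullback.fst f g, pullback.snd f g, pullback.condition, ?_⟩
  intro Q q₁ q₂ h
  refine ⟨pullback.lift q₁ q₂ h, ⟨pullback.lift_fst .., pullback.lift_snd ..⟩, ?_⟩
  rintro w ⟨hw1, hw2⟩
  apply pullback.hom_ext
  · rw [hw1]; exact (pullback.lift_fst ..).symm
  · rw [hw2]; exact (pullback.lift_snd ..).symm

lemma exists_nkernel (hC : IsRegularCat C) {M : MorClass C} (hpv : IsPointedVia M)
    {R X : C} (u : R ⟶ X) : ∃ (K : C) (κ : K ⟶ R), IsNKernel M u κ := by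
  haveI := hC.hasFiniteLimits
  obtain ⟨ν, hν, -⟩ := hpv.2 R X
  refine ⟨equalizer u ν, equalizer.ι u ν, ?_, ?_⟩
  · rw [equalizer.condition u ν]
    exact hpv.1.1 _ _ hν
  · intro K' k' hk'
    have h1 : k' ≫ u = k' ≫ ν := by
      obtain ⟨ν₀, -, hu⟩ := hpv.2 K' X
      exact (hu _ hk').trans (hu _ (hpv.1.1 _ _ hν)).symm
    refine ⟨equalizer.lift k' h1, equalizer.lift_ι .., fun y hy => ?_⟩
    rw [← cancel_mono (equalizer.ι u ν), hy, equalizer.lift_ι]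

end Aux

section Aux2

variable {P : Set C} {N : MorClass C}

lemma N_to_ext (hpt : IsPointedOn P N) {A B : C} {f : A ⟶ B} (hf : N f) :
    extClass P N f := by
  obtain ⟨hA, hB⟩ := hpt.1.1 f hf
  exact ⟨A, B, hA, hB, f, 𝟙 A, 𝟙 B, regEpi_id A, regEpi_id B, hf, by simp⟩

lemma ext_to_N (hP : IsRegularCompletionOf P) (hpt : IsPointedOn P N)
    {A B : C} (hA : A ∈ P) (hB : B ∈ P) {f : A ⟶ B} (hf : extClass P N f) : N f := by
  obtain ⟨A', B', hA', hB', n, e, e', he, he', hn, heq⟩ := hf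
  obtain ⟨σ, hσ⟩ := hP.1.proj hA e he (𝟙 A)
  have : f = σ ≫ (e ≫ f) := by rw [← Category.assoc, hσ, Category.id_comp]
  rw [this, heq]
  exact hpt.1.2.1 σ _ hA (hpt.1.2.2 n e' hB hn)

/-- Weak `N`-kernels exist in `P`, via weak finite limits. -/
lemma exists_weakKernelOn (hwfl : HasWeakFiniteLimitsOn P) (hpt : IsPointedOn P N)
    {G₁ G₀ : C} (h1 : G₁ ∈ P) (h0 : G₀ ∈ P) (d : G₁ ⟶ G₀) :
    ∃ (K : C) (k : K ⟶ G₁), IsWeakKernelOn P N d k := by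
  obtain ⟨ν, hν, hνu⟩ := hpt.2 h1 h0
  let O₁ : ObjectProperty.FullSubcategory (fun X : C => X ∈ P) := ⟨G₁, h1⟩
  let O₀ : ObjectProperty.FullSubcategory (fun X : C => X ∈ P) := ⟨G₀, h0⟩
  let F := parallelPair (show O₁ ⟶ O₀ from ObjectProperty.homMk d)
    (show O₁ ⟶ O₀ from ObjectProperty.homMk ν)
  obtain ⟨c, hc⟩ := hwfl WalkingParallelPair F
  have key : ((c.π.app WalkingParallelPair.zero).hom ≫ d : c.pt.obj ⟶ G₀) =
      ((c.π.app WalkingParallelPair.zero).hom ≫ ν : c.pt.obj ⟶ G₀) := by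
    have ha := congrArg (fun f => f.hom) (c.w WalkingParallelPairHom.left)
    have hb := congrArg (fun f => f.hom) (c.w WalkingParallelPairHom.right)
    exact ha.trans hb.symm
  refine ⟨c.pt.obj, (c.π.app WalkingParallelPair.zero).hom, c.pt.property, ?_, ?_⟩
  · rw [key]
    exact hpt.1.2.1 _ _ c.pt.property hν
  · intro K' hK' k' hk'
    obtain ⟨ν', hν', hν'u⟩ := hpt.2 hK' h0
    have h1' : k' ≫ d = k' ≫ ν :=
      (hν'u (k' ≫ d) hk').trans (hν'u (k' ≫ ν) (hpt.1.2.1 k' ν hK' hν)).symm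
    let ι : (⟨K', hK'⟩ : ObjectProperty.FullSubcategory (fun X : C => X ∈ P)) ⟶ O₁ :=
      ObjectProperty.homMk k'
    have h2' : ι ≫ (show O₁ ⟶ O₀ from ObjectProperty.homMk d) =
        ι ≫ (show O₁ ⟶ O₀ from ObjectProperty.homMk ν) := InducedCategory.hom_ext h1'
    let c' : Cone F := Fork.ofι ι h2'
    obtain ⟨φ⟩ := hc c'
    have hw := φ.w WalkingParallelPair.zero
    exact ⟨φ.hom.hom, congrArg (fun f => f.hom) hw⟩

end Aux2

section Aux3

variable {P : Set C} {N : MorClass C}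

lemma ext_ideal (hP : IsRegularCompletionOf P) (hpt : IsPointedOn P N) :
    IsMorIdeal (extClass P N) := by
  constructor
  · rintro X Y Z f g ⟨A, B, hA, hB, n, e, e', he, he', hn, heq⟩
    obtain ⟨A₀, hA₀, e0, he0⟩ := hP.1.covers X
    obtain ⟨l, hl⟩ := hP.1.proj hA₀ e he (e0 ≫ f)
    refine ⟨A₀, B, hA₀, hB, l ≫ n, e0, e', he0, he', hpt.1.2.1 l n hA₀ hn, ?_⟩
    rw [← Category.assoc, ← hl, Category.assoc, heq, ← Category.assoc]
  · rintro X Y Z f g ⟨A, B, hA, hB, n, e, e', he, he', hn, heq⟩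
    obtain ⟨B₀, hB₀, c, hc⟩ := hP.1.covers Z
    obtain ⟨l, hl⟩ := hP.1.proj hB c hc (e' ≫ g)
    refine ⟨A, B₀, hA, hB₀, n ≫ l, e, c, he, hc, hpt.1.2.2 n l hB₀ hn, ?_⟩
    rw [← Category.assoc, heq, Category.assoc, ← hl, ← Category.assoc]

lemma ext_exists_null (hC : IsRegularCat C) (hP : IsRegularCompletionOf P)
    (hpt : IsPointedOn P N) (X Y : C) : ∃ f : X ⟶ Y, extClass P N f := by
  obtain ⟨A, hA, e, he⟩ := hP.1.covers X
  obtain ⟨B, hB, e', he'⟩ := hP.1.covers Y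
  obtain ⟨n, hn, -⟩ := hpt.2 hA hB
  obtain ⟨R, r₁, r₂, hkp, -⟩ := exists_kernelPair hC e
  obtain ⟨Q, hQ, q, hq⟩ := hP.1.covers R
  obtain ⟨ν, hν, hνu⟩ := hpt.2 hQ hB
  have h1 : q ≫ r₁ ≫ n = q ≫ r₂ ≫ n := by
    have a1 : N ((q ≫ r₁) ≫ n) := hpt.1.2.1 _ _ hQ hn
    have a2 : N ((q ≫ r₂) ≫ n) := hpt.1.2.1 _ _ hQ hn
    rw [← Category.assoc, ← Category.assoc]
    exact (hνu _ a1).trans (hνu _ a2).symm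
  have h2 : r₁ ≫ n = r₂ ≫ n := hq.cancel h1
  have h3 : r₁ ≫ n ≫ e' = r₂ ≫ n ≫ e' := by
    rw [← Category.assoc, h2, Category.assoc]
  obtain ⟨f, hf, -⟩ := (regEpi_coeq_kp he hkp).2 (n ≫ e') h3
  exact ⟨f, A, B, hA, hB, n, e, e', he, he', hn, hf⟩

lemma ext_unique_null (hC : IsRegularCat C) (hP : IsRegularCompletionOf P)
    (hpt : IsPointedOn P N) {X Y : C} {f f' : X ⟶ Y}
    (hf : extClass P N f) (hf' : extClass P N f') : f = f' := by
  obtain ⟨A, B, hA, hB, n, e, e', he, he', hn, heq⟩ := hf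
  obtain ⟨A', B', hA', hB', n', e'', e''', he'', he''', hn', heq'⟩ := hf'
  obtain ⟨nn, obj, hobj, m, hm⟩ := hP.2 Y
  obtain ⟨T, t, t', hT⟩ := exists_pullbackSq hC e e''
  have ht : IsRegEpi t := hC.regEpiStable t t' e e'' hT he''
  obtain ⟨S, hS, s, hs⟩ := hP.1.covers T
  have key : ∀ i, f ≫ m i = f' ≫ m i := by
    intro i
    obtain ⟨ν, hν, hνu⟩ := hpt.2 hS (hobj i)
    have b1 : N (s ≫ t ≫ n ≫ e' ≫ m i) := by
      have := hpt.1.2.1 (s ≫ t) (n ≫ e' ≫ m i) hS (hpt.1.2.2 n (e' ≫ m i) (hobj i) hn)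
      simpa using this
    have b2 : N (s ≫ t' ≫ n' ≫ e''' ≫ m i) := by
      have := hpt.1.2.1 (s ≫ t') (n' ≫ e''' ≫ m i) hS
        (hpt.1.2.2 n' (e''' ≫ m i) (hobj i) hn')
      simpa using this
    have c1 : s ≫ t ≫ e ≫ f ≫ m i = s ≫ t ≫ n ≫ e' ≫ m i := by
      rw [reassoc_of% heq]
    have c2 : s ≫ t' ≫ e'' ≫ f' ≫ m i = s ≫ t' ≫ n' ≫ e''' ≫ m i := by
      rw [reassoc_of% heq']
    have c0 : s ≫ t ≫ e ≫ f' ≫ m i = s ≫ t' ≫ e'' ≫ f' ≫ m i := by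
      rw [reassoc_of% hT.1]
    have hnul : s ≫ t ≫ n ≫ e' ≫ m i = s ≫ t' ≫ n' ≫ e''' ≫ m i :=
      (hνu _ b1).trans (hνu _ b2).symm
    have hfin : s ≫ t ≫ e ≫ f ≫ m i = s ≫ t ≫ e ≫ f' ≫ m i := by
      rw [c1, hnul, ← c2, ← c0]
    exact he.cancel (ht.cancel (hs.cancel hfin))
  exact hm f f' key

lemma pointedVia_ext (hC : IsRegularCat C) (hP : IsRegularCompletionOf P)
    (hpt : IsPointedOn P N) : IsPointedVia (extClass P N) := by
  refine ⟨ext_ideal hP hpt, fun X Y => ?_⟩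
  obtain ⟨f, hf⟩ := ext_exists_null hC hP hpt X Y
  exact ⟨f, hf, fun y hy => ext_unique_null hC hP hpt hy hf⟩

end Aux3

section Aux4

variable {P : Set C} {N : MorClass C}

/-- (∗π₀) for reflexive graphs in `P` transfers to reflexive pairs in `C`. -/
lemma transfer_starpi0 (hC : IsRegularCat C) (hP : IsRegularCompletionOf P)
    (hwfl : HasWeakFiniteLimitsOn P) (hpt : IsPointedOn P N)
    (hstar : ReflGraphsStarPi0On P N)
    {R X Z : C} {u v : R ⟶ X} {δ : X ⟶ R} (hδu : δ ≫ u = 𝟙 X) (hδv : δ ≫ v = 𝟙 X)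
    {K : C} {κ : K ⟶ R} (hκ : IsNKernel (extClass P N) u κ)
    (g : X ⟶ Z) (hg : κ ≫ u ≫ g = κ ≫ v ≫ g) : u ≫ g = v ≫ g := by
  obtain ⟨G₀, hG₀, p, hp⟩ := hP.1.covers X
  obtain ⟨Q₁, πR, πa, hQ₁⟩ := exists_pullbackSq hC u p
  have hπR : IsRegEpi πR := hC.regEpiStable πR πa u p hQ₁ hp
  obtain ⟨Q, ρ₁, ρb, hQ⟩ := exists_pullbackSq hC (πR ≫ v) p
  have hρ₁ : IsRegEpi ρ₁ := hC.regEpiStable ρ₁ ρb (πR ≫ v) p hQ hp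
  obtain ⟨s₁, ⟨hs₁R, hs₁a⟩, -⟩ := hQ₁.2 (p ≫ δ) (𝟙 G₀)
    (by rw [Category.assoc, hδu, Category.comp_id, Category.id_comp])
  obtain ⟨s, ⟨hsρ, hsb⟩, -⟩ := hQ.2 s₁ (𝟙 G₀)
    (by rw [← Category.assoc, hs₁R, Category.assoc, hδv, Category.comp_id,
      Category.id_comp])
  obtain ⟨G₁, hG₁, e₂, he₂⟩ := hP.1.covers Q
  obtain ⟨esec, hesec⟩ := hP.1.proj hG₀ e₂ he₂ s
  set d : G₁ ⟶ G₀ := e₂ ≫ ρ₁ ≫ πa with hd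
  set c : G₁ ⟶ G₀ := e₂ ≫ ρb with hcdef
  set t : G₁ ⟶ R := e₂ ≫ ρ₁ ≫ πR with ht
  have hed : esec ≫ d = 𝟙 G₀ := by
    rw [hd, ← Category.assoc, hesec, ← Category.assoc, hsρ, hs₁a]
  have hec : esec ≫ c = 𝟙 G₀ := by
    rw [hcdef, ← Category.assoc, hesec, hsb]
  have htu : t ≫ u = d ≫ p := by
    rw [ht, hd]
    simp only [Category.assoc]
    rw [hQ₁.1]
  have htv : t ≫ v = c ≫ p := by
    rw [ht, hcdef]
    simp only [Category.assoc]
    have := hQ.1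
    rw [this]
  obtain ⟨K', k', hK', hkd, hkuniv⟩ := exists_weakKernelOn hwfl hpt hG₁ hG₀ d
  have hM : extClass P N ((k' ≫ t) ≫ u) := by
    refine ⟨K', G₀, hK', hG₀, k' ≫ d, 𝟙 K', p, regEpi_id K', hp, hkd, ?_⟩
    rw [Category.id_comp, Category.assoc, htu, ← Category.assoc]
  obtain ⟨w, hw, -⟩ := hκ.2 (k' ≫ t) hM
  have key : k' ≫ t ≫ u ≫ g = k' ≫ t ≫ v ≫ g := by
    have h1 : (k' ≫ t) ≫ u ≫ g = (k' ≫ t) ≫ v ≫ g := by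
      rw [← hw]
      simp only [Category.assoc]
      rw [hg]
    simpa only [Category.assoc] using h1
  obtain ⟨nn, obj, hobj, m, hm⟩ := hP.2 Z
  have hi : ∀ i, t ≫ u ≫ g ≫ m i = t ≫ v ≫ g ≫ m i := by
    intro i
    have hsp := hstar hG₁ hG₀ d c esec hed hec k' ⟨hK', hkd, hkuniv⟩ (hobj i)
      (p ≫ g ≫ m i)
    have hpre : k' ≫ d ≫ p ≫ g ≫ m i = k' ≫ c ≫ p ≫ g ≫ m i := by
      have e1 : k' ≫ d ≫ p ≫ g ≫ m i = (k' ≫ t ≫ u ≫ g) ≫ m i := by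
        rw [reassoc_of% htu]
        simp only [Category.assoc]
      have e2 : k' ≫ c ≫ p ≫ g ≫ m i = (k' ≫ t ≫ v ≫ g) ≫ m i := by
        rw [reassoc_of% htv]
        simp only [Category.assoc]
      rw [e1, e2, key]
    have hconc : d ≫ p ≫ g ≫ m i = c ≫ p ≫ g ≫ m i := hsp.mp hpre
    calc t ≫ u ≫ g ≫ m i = d ≫ p ≫ g ≫ m i := by rw [reassoc_of% htu]
      _ = c ≫ p ≫ g ≫ m i := hconc
      _ = t ≫ v ≫ g ≫ m i := by rw [reassoc_of% htv.symm]
  have hmono : t ≫ u ≫ g = t ≫ v ≫ g := by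
    apply hm (t ≫ u ≫ g) (t ≫ v ≫ g)
    intro i
    simpa only [Category.assoc] using hi i
  have h2 : e₂ ≫ ρ₁ ≫ πR ≫ u ≫ g = e₂ ≫ ρ₁ ≫ πR ≫ v ≫ g := by
    simpa only [ht, Category.assoc] using hmono
  exact hπR.cancel (hρ₁.cancel (he₂.cancel h2))

end Aux4

/-- Let P be a pointed category with weak finite limits. The regular
completion C of P is a normal category (pointed, with every regular epimorphism a normal
epimorphism) iff every internal reflexive graph in P satisfies (∗π₀) with respect to the
ideal of null morphisms of P. -/
theorem statement15 (hC : IsRegularCat C) (P : Set C) (hP : IsRegularCompletionOf P)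
    (hwfl : HasWeakFiniteLimitsOn P) (N : MorClass C) (hpt : IsPointedOn P N) :
    (IsPointedVia (extClass P N) ∧
        ∀ ⦃X Y : C⦄ (f : X ⟶ Y), IsRegEpi f → IsNormalEpi (extClass P N) f) ↔
      ReflGraphsStarPi0On P N := by
  constructor
  · -- normality implies (∗π₀)
    rintro ⟨hpv, hnorm⟩
    intro G₁ G₀ hG₁ hG₀ d c e hed hec
    intro K k hk Z hZ g
    obtain ⟨hK, hkd, hkuniv⟩ := hk
    constructor
    · intro hkg
      have hreg : IsRegEpi d := splitEpi_regEpi hed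
      obtain ⟨R, u, v, hkp, -⟩ := exists_kernelPair hC d
      obtain ⟨KR, κ, hκ⟩ := exists_nkernel hC hpv u
      obtain ⟨K', hK', π, hπ⟩ := hP.1.covers KR
      -- π ≫ κ ≫ v ≫ d is null
      have m1 : extClass P N ((π ≫ κ ≫ v) ≫ d) := by
        have e1 : (π ≫ κ ≫ v) ≫ d = π ≫ κ ≫ u ≫ d := by
          simp only [Category.assoc]
          rw [← hkp.1]
        rw [e1]
        have := hpv.1.1 π ((κ ≫ u) ≫ d) (hpv.1.2 (κ ≫ u) d hκ.1)
        simpa only [Category.assoc] using this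
      have n1 : N ((π ≫ κ ≫ v) ≫ d) := ext_to_N hP hpt hK' hG₀ m1
      obtain ⟨w', hw'⟩ := hkuniv hK' (π ≫ κ ≫ v) n1
      have n2 : N (π ≫ κ ≫ v ≫ c ≫ g) := by
        have e4 : π ≫ κ ≫ v ≫ c ≫ g = w' ≫ k ≫ d ≫ g := by
          rw [← reassoc_of% hw', ← hkg]
        rw [e4]
        have := hpt.1.2.1 w' ((k ≫ d) ≫ g) hK' (hpt.1.2.2 (k ≫ d) g hZ hkd)
        simpa only [Category.assoc] using this
      have mA : extClass P N (κ ≫ v ≫ c ≫ g) :=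
        ⟨K', Z, hK', hZ, π ≫ κ ≫ v ≫ c ≫ g, π, 𝟙 Z, hπ, regEpi_id Z, n2, by simp⟩
      have mB : extClass P N (κ ≫ u ≫ c ≫ g) := by
        have := hpv.1.2 (κ ≫ u) (c ≫ g) hκ.1
        simpa only [Category.assoc] using this
      have stepC : κ ≫ u ≫ c ≫ g = κ ≫ v ≫ c ≫ g := ext_unique_null hC hP hpt mB mA
      -- use normality of the split epi d
      obtain ⟨A, h₀, hh₀, hu₀⟩ := hnorm d hreg
      obtain ⟨ν, hν, -⟩ := hpv.2 A G₁
      have hνd : ν ≫ d = h₀ ≫ d := ext_unique_null hC hP hpt (hpv.1.2 ν d hν) hh₀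
      obtain ⟨w, ⟨hwu, hwv⟩, -⟩ := hkp.2 ν h₀ hνd
      have hwun : extClass P N (w ≫ u) := by rw [hwu]; exact hν
      obtain ⟨w₂, hw₂, -⟩ := hκ.2 w hwun
      have hfac : h₀ ≫ c ≫ g = w₂ ≫ κ ≫ v ≫ c ≫ g := by
        rw [← hwv, ← hw₂]
        simp only [Category.assoc]
      have mh : extClass P N (h₀ ≫ c ≫ g) := by
        rw [hfac, ← stepC]
        exact hpv.1.1 w₂ (κ ≫ u ≫ c ≫ g) mB
      obtain ⟨tt, htt, -⟩ := hu₀ (c ≫ g) mh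
      obtain ⟨w₃, ⟨hw₃u, hw₃v⟩, -⟩ := hkp.2 (𝟙 G₁) (d ≫ e)
        (by rw [Category.id_comp, Category.assoc, hed, Category.comp_id])
      have h6 : u ≫ c ≫ g = v ≫ c ≫ g := by
        rw [← htt, reassoc_of% hkp.1]
      calc d ≫ g = d ≫ e ≫ c ≫ g := by rw [reassoc_of% hec]
        _ = (w₃ ≫ v) ≫ c ≫ g := by rw [hw₃v]; simp only [Category.assoc]
        _ = w₃ ≫ u ≫ c ≫ g := by rw [Category.assoc, ← h6]
        _ = (w₃ ≫ u) ≫ c ≫ g := by rw [Category.assoc]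
        _ = c ≫ g := by rw [hw₃u, Category.id_comp]
    · intro h
      rw [h]
  · -- (∗π₀) implies normality
    intro hstar
    have hpv : IsPointedVia (extClass P N) := pointedVia_ext hC hP hpt
    refine ⟨hpv, ?_⟩
    intro X Y f hf
    obtain ⟨R, u, v, hkp, δ, hδu, hδv⟩ := exists_kernelPair hC f
    obtain ⟨K, κ, hκ⟩ := exists_nkernel hC hpv u
    refine ⟨K, κ ≫ v, ?_, ?_⟩
    · have e1 : (κ ≫ v) ≫ f = (κ ≫ u) ≫ f := by
        simp only [Category.assoc]
        rw [← hkp.1]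
      rw [e1]
      exact hpv.1.2 (κ ≫ u) f hκ.1
    · intro Z g hg
      have mB : extClass P N (κ ≫ u ≫ g) := by
        have := hpv.1.2 (κ ≫ u) g hκ.1
        simpa only [Category.assoc] using this
      have mA : extClass P N (κ ≫ v ≫ g) := by
        simpa only [Category.assoc] using hg
      have heq : κ ≫ u ≫ g = κ ≫ v ≫ g := ext_unique_null hC hP hpt mB mA
      have huv : u ≫ g = v ≫ g :=
        transfer_starpi0 hC hP hwfl hpt hstar hδu hδv hκ g heq
      exact (regEpi_coeq_kp hf hkp).2 g huv
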